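/- Let n, q, m11, m12, m21, m22 be naturals with n ≥ 1, q ≥ 1 and m11, m12, m21, m22 ≤ q. Let W1, W2 be random variables with values in nonempty finite types and let X1, X2 : Ω → (Fin n → (Fin q → ZMod 2)) be random variables such that the pair (W1, X1) is independent of the pair (W2, X2). Define the channel outputs pointwise by y1 t = D_{m11}(X1 t) + D_{m12}(X2 t) and y2 t = D_{m21}(X1 t) + D_{m22}(X2 t). Then ( I(W1 : y1) − I(W1 : y2) ) + I(X1 : y1) + I(X2 : y2) ≤ n · ( max(m11, m12) + (m11 − m21)^+ + (m22 − m12)^+ ) · log 2. -/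

import Mathlib

open MeasureTheory ProbabilityTheory Real

/-- Shannon entropy (natural logarithm) of a random variable with values in a finite type. -/
noncomputable def entropy {Ω : Type*} [MeasurableSpace Ω] (μ : Measure Ω)
    {S : Type*} [Fintype S] (X : Ω → S) : ℝ :=
  - ∑ x : S, ((μ (X ⁻¹' {x})).toReal * Real.log (μ (X ⁻¹' {x})).toReal)

/-- Conditional entropy H(X | Y) := H(⟨X,Y⟩) − H(Y). -/
noncomputable def condEntropy {Ω : Type*} [MeasurableSpace Ω] (μ : Measure Ω)
    {S T : Type*} [Fintype S] [Fintype T] (X : Ω → S) (Y : Ω → T) : ℝ :=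
  entropy μ (fun ω => (X ω, Y ω)) - entropy μ Y

/-- Mutual information I(X : Y) := H(X) + H(Y) − H(⟨X,Y⟩). -/
noncomputable def mutualInfo {Ω : Type*} [MeasurableSpace Ω] (μ : Measure Ω)
    {S T : Type*} [Fintype S] [Fintype T] (X : Ω → S) (Y : Ω → T) : ℝ :=
  entropy μ X + entropy μ Y - entropy μ (fun ω => (X ω, Y ω))

/-- The shift map `D_m` : multiplication by `S^(q-m)` with `S` the `q × q` lower shift matrix. -/
def Dmap (q m : ℕ) (x : Fin q → ZMod 2) : Fin q → ZMod 2 :=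
  fun i => if _ : q - m ≤ (i : ℕ) then
      x ⟨(i : ℕ) - (q - m), Nat.lt_of_le_of_lt (Nat.sub_le _ _) i.isLt⟩
    else 0

open Finset

namespace Aux
attribute [local instance] Classical.propDecidable
set_option linter.unusedSectionVars false
set_option maxHeartbeats 1000000

variable {Ω : Type*} [MeasurableSpace Ω] (μ : Measure Ω) [IsProbabilityMeasure μ]
variable {S T U : Type*} [Fintype S] [Fintype T] [Fintype U]
  [MeasurableSpace S] [MeasurableSingletonClass S]
  [MeasurableSpace T] [MeasurableSingletonClass T]
  [MeasurableSpace U] [MeasurableSingletonClass U]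

noncomputable def p (X : Ω → S) (x : S) : ℝ := (μ (X ⁻¹' {x})).toReal

lemma entropy_eq (X : Ω → S) : entropy μ X = - ∑ x : S, p μ X x * Real.log (p μ X x) := rfl

lemma p_nonneg (X : Ω → S) (x : S) : 0 ≤ p μ X x := ENNReal.toReal_nonneg

lemma sum_p {X : Ω → S} (hX : Measurable X) : ∑ x : S, p μ X x = 1 := by
  have h : ∑ x ∈ (univ : Finset S), μ (X ⁻¹' {x}) = μ (X ⁻¹' ↑(univ : Finset S)) :=
    sum_measure_preimage_singleton _ (fun y _ => hX (measurableSet_singleton y))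
  have h3 : ∑ x ∈ (univ : Finset S), μ (X ⁻¹' {x}) = 1 := by rw [h]; simp
  have := congrArg ENNReal.toReal h3
  rw [ENNReal.toReal_sum (fun a _ => measure_ne_top μ _)] at this
  simpa [p] using this

lemma p_comp (f : S → T) {X : Ω → S} (hX : Measurable X) (y : T) :
    p μ (f ∘ X) y = ∑ x ∈ univ.filter (fun x => f x = y), p μ X x := by
  have hset : (f ∘ X) ⁻¹' {y} = X ⁻¹' ↑(univ.filter (fun x => f x = y)) := by
    ext ω; simp
  have h : ∑ x ∈ univ.filter (fun x => f x = y), μ (X ⁻¹' {x})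
      = μ (X ⁻¹' ↑(univ.filter (fun x => f x = y))) :=
    sum_measure_preimage_singleton _ (fun y _ => hX (measurableSet_singleton y))
  rw [p, hset, ← h, ENNReal.toReal_sum (fun a _ => measure_ne_top μ _)]
  rfl

lemma p_comp_le (f : S → T) (X : Ω → S) (x : S) :
    p μ X x ≤ p μ (f ∘ X) (f x) := by
  apply ENNReal.toReal_mono (measure_ne_top μ _)
  apply measure_mono
  intro ω hω
  simp only [Set.mem_preimage, Set.mem_singleton_iff] at *
  simp [hω]

lemma sum_p_comp_mul (f : S → T) {X : Ω → S} (hX : Measurable X) (g : T → ℝ) :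
    ∑ y : T, p μ (f ∘ X) y * g y = ∑ x : S, p μ X x * g (f x) := by
  rw [← Finset.sum_fiberwise (univ : Finset S) f (fun x => p μ X x * g (f x))]
  apply Finset.sum_congr rfl
  intro y _
  rw [p_comp μ f hX, Finset.sum_mul]
  apply Finset.sum_congr rfl
  intro x hx
  simp only [mem_filter] at hx
  rw [hx.2]

lemma entropy_comp_le (f : S → T) {X : Ω → S} (hX : Measurable X) :
    entropy μ (f ∘ X) ≤ entropy μ X := by
  rw [entropy_eq, entropy_eq, neg_le_neg_iff]
  rw [sum_p_comp_mul μ f hX (fun y => Real.log (p μ (f ∘ X) y))]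
  apply Finset.sum_le_sum
  intro x _
  rcases eq_or_lt_of_le (p_nonneg μ X x) with h0 | h0
  · simp [← h0]
  · exact mul_le_mul_of_nonneg_left (Real.log_le_log h0 (p_comp_le μ f X x)) (le_of_lt h0)

lemma entropy_le_of_comp {X : Ω → S} {Y : Ω → T} (hX : Measurable X) (f : S → T)
    (h : ∀ ω, f (X ω) = Y ω) : entropy μ Y ≤ entropy μ X := by
  have : f ∘ X = Y := funext h
  rw [← this]; exact entropy_comp_le μ f hX

lemma entropy_eq_of_comp₂ {X : Ω → S} {Y : Ω → T} (hX : Measurable X) (hY : Measurable Y)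
    (f : S → T) (g : T → S) (hf : ∀ ω, f (X ω) = Y ω) (hg : ∀ ω, g (Y ω) = X ω) :
    entropy μ Y = entropy μ X :=
  le_antisymm (entropy_le_of_comp μ hX f hf) (entropy_le_of_comp μ hY g hg)

lemma entropy_le_log_card {X : Ω → S} (hX : Measurable X) :
    entropy μ X ≤ Real.log (Fintype.card S) := by
  have hsum := sum_p μ hX
  have hne : Nonempty S := by
    by_contra h
    rw [not_nonempty_iff] at h
    rw [Finset.univ_eq_empty, Finset.sum_empty] at hsum
    norm_num at hsum
  have hcard : (0:ℝ) < Fintype.card S := by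
    have := Fintype.card_pos_iff.mpr hne; positivity
  set N : ℝ := (Fintype.card S : ℝ)
  set F : Finset S := univ.filter (fun x => 0 < p μ X x) with hF
  have hzero : ∀ x ∈ univ \ F, p μ X x = 0 := by
    intro x hx
    simp only [hF, Finset.mem_sdiff, Finset.mem_filter, Finset.mem_univ, true_and, not_lt] at hx
    exact le_antisymm hx (p_nonneg μ X x)
  have hsumF : ∑ x ∈ F, p μ X x = 1 := by
    rw [← hsum]
    apply Finset.sum_subset (Finset.subset_univ F)
    intro x hx hx2
    exact hzero x (Finset.mem_sdiff.mpr ⟨hx, hx2⟩)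
  have hentF : entropy μ X = - ∑ x ∈ F, p μ X x * Real.log (p μ X x) := by
    rw [entropy_eq, neg_inj]
    apply (Finset.sum_subset (Finset.subset_univ F) _).symm
    intro x hx hx2
    rw [hzero x (Finset.mem_sdiff.mpr ⟨hx, hx2⟩)]; ring
  have key : ∀ x ∈ F, - (p μ X x * Real.log (p μ X x)) - p μ X x * Real.log N
      ≤ 1 / N - p μ X x := by
    intro x hx
    simp only [hF, Finset.mem_filter] at hx
    have hp : 0 < p μ X x := hx.2
    have hpN : 0 < p μ X x * N := by positivity
    have hlog := Real.log_le_sub_one_of_pos (x := (p μ X x * N)⁻¹) (by positivity)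
    rw [Real.log_inv] at hlog
    have h2 : -Real.log (p μ X x * N) ≤ 1 / (p μ X x * N) - 1 := by
      rw [one_div]; exact hlog
    rw [Real.log_mul (ne_of_gt hp) (ne_of_gt hcard)] at h2
    have := mul_le_mul_of_nonneg_left h2 (le_of_lt hp)
    have heq : p μ X x * (1 / (p μ X x * N) - 1) = 1 / N - p μ X x := by
      field_simp
    calc - (p μ X x * Real.log (p μ X x)) - p μ X x * Real.log N
        = p μ X x * (-(Real.log (p μ X x) + Real.log N)) := by ring
      _ ≤ p μ X x * (1 / (p μ X x * N) - 1) := this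
      _ = 1 / N - p μ X x := heq
  have hsum2 : ∑ x ∈ F, (- (p μ X x * Real.log (p μ X x)) - p μ X x * Real.log N)
      ≤ ∑ x ∈ F, (1 / N - p μ X x) := Finset.sum_le_sum key
  have e1 : ∑ x ∈ F, -(p μ X x * Real.log (p μ X x)) = entropy μ X := by
    rw [hentF, Finset.sum_neg_distrib]
  have e2 : ∑ x ∈ F, p μ X x * Real.log N = Real.log N := by
    rw [← Finset.sum_mul, hsumF, one_mul]
  have e3 : ∑ x ∈ F, (1/N) = (F.card : ℝ) * (1/N) := by
    rw [Finset.sum_const, nsmul_eq_mul]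
  rw [Finset.sum_sub_distrib, Finset.sum_sub_distrib, e1, e2, e3, hsumF] at hsum2
  have hFcard : (F.card : ℝ) ≤ N := by
    have : F.card ≤ Fintype.card S := by
      rw [← Finset.card_univ]; exact Finset.card_le_card (Finset.subset_univ F)
    show (F.card:ℝ) ≤ ((Fintype.card S : ℕ) : ℝ)
    exact_mod_cast this
  have h4 : (F.card : ℝ) * (1/N) ≤ 1 := by
    calc (F.card : ℝ) * (1/N) ≤ N * (1/N) := by
          apply mul_le_mul_of_nonneg_right hFcard; positivity
      _ = 1 := by field_simp
  linarith


lemma p_pair_indep {X : Ω → S} {Y : Ω → T} (h : IndepFun X Y μ) (x : S) (y : T) :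
    p μ (fun ω => (X ω, Y ω)) (x, y) = p μ X x * p μ Y y := by
  have hset : (fun ω => (X ω, Y ω)) ⁻¹' {(x, y)} = X ⁻¹' {x} ∩ Y ⁻¹' {y} := by
    ext ω; simp [Prod.ext_iff]
  rw [p, hset, h.measure_inter_preimage_eq_mul _ _ (measurableSet_singleton x)
    (measurableSet_singleton y), ENNReal.toReal_mul]
  rfl

lemma xlogx_mul (a b : ℝ) (ha : 0 ≤ a) (hb : 0 ≤ b) :
    a * b * Real.log (a * b) = b * (a * Real.log a) + a * (b * Real.log b) := by
  rcases eq_or_lt_of_le ha with h | h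
  · simp [← h]
  rcases eq_or_lt_of_le hb with h' | h'
  · simp [← h']
  rw [Real.log_mul (ne_of_gt h) (ne_of_gt h')]
  ring

lemma entropy_pair_indep {X : Ω → S} {Y : Ω → T} (hX : Measurable X) (hY : Measurable Y)
    (h : IndepFun X Y μ) :
    entropy μ (fun ω => (X ω, Y ω)) = entropy μ X + entropy μ Y := by
  have key : ∀ w : S × T, p μ (fun ω => (X ω, Y ω)) w * Real.log (p μ (fun ω => (X ω, Y ω)) w)
      = p μ Y w.2 * (p μ X w.1 * Real.log (p μ X w.1))
        + p μ X w.1 * (p μ Y w.2 * Real.log (p μ Y w.2)) := by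
    rintro ⟨x, y⟩
    rw [p_pair_indep μ h]
    exact xlogx_mul _ _ (p_nonneg μ X x) (p_nonneg μ Y y)
  show - ∑ w : S × T, p μ (fun ω => (X ω, Y ω)) w * Real.log (p μ (fun ω => (X ω, Y ω)) w) = _
  rw [Finset.sum_congr rfl (fun w _ => key w)]
  rw [Finset.sum_add_distrib]
  rw [Fintype.sum_prod_type]
  simp only [← Finset.mul_sum, ← Finset.sum_mul]
  rw [Fintype.sum_prod_type_right]
  simp only [← Finset.mul_sum, ← Finset.sum_mul]
  rw [sum_p μ hX, sum_p μ hY, one_mul, one_mul, entropy_eq, entropy_eq]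
  ring
lemma submodularity {X : Ω → S} {Y : Ω → T} {Z : Ω → U}
    (hX : Measurable X) (hY : Measurable Y) (hZ : Measurable Z) :
    entropy μ (fun ω => ((X ω, Y ω), Z ω)) + entropy μ Y
      ≤ entropy μ (fun ω => (X ω, Y ω)) + entropy μ (fun ω => (Y ω, Z ω)) := by
  set V : Ω → (S × T) × U := fun ω => ((X ω, Y ω), Z ω) with hV
  have hVm : Measurable V := (hX.prodMk hY).prodMk hZ
  set f1 : (S × T) × U → S × T := Prod.fst with hf1
  set f2 : (S × T) × U → T × U := fun w => (w.1.2, w.2) with hf2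
  set f3 : (S × T) × U → T := fun w => w.1.2 with hf3
  set a : (S × T) × U → ℝ := p μ V with ha
  set b : S × T → ℝ := p μ (f1 ∘ V) with hb
  set c : T × U → ℝ := p μ (f2 ∘ V) with hc
  set d : T → ℝ := p μ (f3 ∘ V) with hd
  have e1 : (fun ω => (X ω, Y ω)) = f1 ∘ V := rfl
  have e2 : (fun ω => (Y ω, Z ω)) = f2 ∘ V := rfl
  have e3 : Y = f3 ∘ V := rfl
  have hXYm : Measurable (f1 ∘ V) := by rw [← e1]; exact hX.prodMk hY
  have hYZm : Measurable (f2 ∘ V) := by rw [← e2]; exact hY.prodMk hZ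
  have hYm : Measurable (f3 ∘ V) := by rw [← e3]; exact hY
  -- entropies as sums over the big space
  have E1 : entropy μ (fun ω => (X ω, Y ω)) = - ∑ w : (S × T) × U, a w * Real.log (b (f1 w)) := by
    rw [e1, entropy_eq]
    exact congrArg Neg.neg (sum_p_comp_mul μ f1 hVm (fun v => Real.log (b v)))
  have E2 : entropy μ (fun ω => (Y ω, Z ω)) = - ∑ w : (S × T) × U, a w * Real.log (c (f2 w)) := by
    rw [e2, entropy_eq]
    exact congrArg Neg.neg (sum_p_comp_mul μ f2 hVm (fun v => Real.log (c v)))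
  have E3 : entropy μ Y = - ∑ w : (S × T) × U, a w * Real.log (d (f3 w)) := by
    rw [e3, entropy_eq]
    exact congrArg Neg.neg (sum_p_comp_mul μ f3 hVm (fun v => Real.log (d v)))
  have E0 : entropy μ V = - ∑ w : (S × T) × U, a w * Real.log (a w) :=
    entropy_eq μ V
  -- pointwise bounds
  have hab : ∀ w, a w ≤ b (f1 w) := fun w => p_comp_le μ f1 V w
  have hac : ∀ w, a w ≤ c (f2 w) := fun w => p_comp_le μ f2 V w
  have had : ∀ w, a w ≤ d (f3 w) := fun w => p_comp_le μ f3 V w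
  have hanon : ∀ w, 0 ≤ a w := fun w => p_nonneg μ V w
  have hbnon : ∀ v, 0 ≤ b v := fun v => p_nonneg μ _ v
  have hcnon : ∀ v, 0 ≤ c v := fun v => p_nonneg μ _ v
  have hdnon : ∀ v, 0 ≤ d v := fun v => p_nonneg μ _ v
  -- marginals
  have hbd : ∀ y : T, ∑ x : S, b (x, y) = d y := by
    intro y
    have hcomp : f3 ∘ V = Prod.snd ∘ (f1 ∘ V) := rfl
    have : d y = ∑ v ∈ univ.filter (fun v : S × T => v.2 = y), b v := by
      rw [hd, hcomp, p_comp μ Prod.snd hXYm y]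
    rw [this, Finset.sum_filter, Fintype.sum_prod_type]
    simp
  have hcd : ∀ y : T, ∑ z : U, c (y, z) = d y := by
    intro y
    have hcomp : f3 ∘ V = Prod.fst ∘ (f2 ∘ V) := rfl
    have : d y = ∑ v ∈ univ.filter (fun v : T × U => v.1 = y), c v := by
      rw [hd, hcomp, p_comp μ Prod.fst hYZm y]
    rw [this, Finset.sum_filter, Fintype.sum_prod_type]
    have h1 : ∀ x : T, ∑ z : U, (if x = y then c (x, z) else 0)
        = if x = y then ∑ z : U, c (x, z) else 0 := by
      intro x; split <;> simp
    rw [Finset.sum_congr rfl (fun x _ => h1 x)]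
    simp
  -- per-term bound
  have hterm : ∀ w : (S × T) × U,
      a w * Real.log (b (f1 w)) + a w * Real.log (c (f2 w)) - a w * Real.log (a w)
        - a w * Real.log (d (f3 w))
      ≤ (if 0 < d (f3 w) then b (f1 w) * c (f2 w) / d (f3 w) else 0) - a w := by
    intro w
    by_cases haw : 0 < a w
    · have hbw : 0 < b (f1 w) := lt_of_lt_of_le haw (hab w)
      have hcw : 0 < c (f2 w) := lt_of_lt_of_le haw (hac w)
      have hdw : 0 < d (f3 w) := lt_of_lt_of_le haw (had w)
      rw [if_pos hdw]
      have hQ : (0:ℝ) < b (f1 w) * c (f2 w) / (a w * d (f3 w)) := by positivity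
      have hlog := Real.log_le_sub_one_of_pos hQ
      have hexp : Real.log (b (f1 w) * c (f2 w) / (a w * d (f3 w)))
          = Real.log (b (f1 w)) + Real.log (c (f2 w)) - Real.log (a w) - Real.log (d (f3 w)) := by
        rw [Real.log_div (by positivity) (by positivity),
          Real.log_mul (ne_of_gt hbw) (ne_of_gt hcw),
          Real.log_mul (ne_of_gt haw) (ne_of_gt hdw)]
        ring
      have := mul_le_mul_of_nonneg_left hlog (le_of_lt haw)
      rw [hexp] at this
      have heq : a w * (b (f1 w) * c (f2 w) / (a w * d (f3 w)) - 1)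
          = b (f1 w) * c (f2 w) / d (f3 w) - a w := by
        field_simp
      calc a w * Real.log (b (f1 w)) + a w * Real.log (c (f2 w)) - a w * Real.log (a w)
            - a w * Real.log (d (f3 w))
          = a w * (Real.log (b (f1 w)) + Real.log (c (f2 w)) - Real.log (a w)
              - Real.log (d (f3 w))) := by ring
        _ ≤ a w * (b (f1 w) * c (f2 w) / (a w * d (f3 w)) - 1) := this
        _ = b (f1 w) * c (f2 w) / d (f3 w) - a w := heq
    · have haw0 : a w = 0 := le_antisymm (not_lt.mp haw) (hanon w)
      rw [haw0]
      have hite : (0:ℝ) ≤ (if 0 < d (f3 w) then b (f1 w) * c (f2 w) / d (f3 w) else 0) := by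
        split
        · have := hbnon (f1 w); have := hcnon (f2 w); have := hdnon (f3 w)
          positivity
        · exact le_refl 0
      simpa using hite
  -- sum of the upper bound
  have hmain : ∑ w : (S × T) × U, (if 0 < d (f3 w) then b (f1 w) * c (f2 w) / d (f3 w) else 0)
      = ∑ y : T, (if 0 < d y then d y else 0) := by
    rw [Fintype.sum_prod_type, Fintype.sum_prod_type, Finset.sum_comm]
    apply Finset.sum_congr rfl
    intro y _
    by_cases hdy : 0 < d y
    · simp only [hf1, hf2, hf3, if_pos hdy]
      have inner : ∀ x : S, ∑ z : U, b (x, y) * c (y, z) / d y = b (x, y) := by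
        intro x
        rw [← Finset.sum_div, ← Finset.mul_sum, hcd y]
        field_simp
      rw [Finset.sum_congr rfl (fun x _ => inner x), hbd y]
    · simp only [hf1, hf2, hf3, if_neg hdy]
      simp [if_neg hdy]
  have hsum1 : ∑ w : (S × T) × U, a w = 1 := sum_p μ hVm
  have hsumd : ∑ y : T, d y = 1 := sum_p μ hYm
  have hditeled : ∑ y : T, (if 0 < d y then d y else 0) ≤ 1 := by
    rw [← hsumd]
    apply Finset.sum_le_sum
    intro y _
    split
    · exact le_refl _
    · exact hdnon y
  have key : ∑ w : (S × T) × U, (a w * Real.log (b (f1 w)) + a w * Real.log (c (f2 w))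
      - a w * Real.log (a w) - a w * Real.log (d (f3 w))) ≤ 0 := by
    calc ∑ w : (S × T) × U, (a w * Real.log (b (f1 w)) + a w * Real.log (c (f2 w))
        - a w * Real.log (a w) - a w * Real.log (d (f3 w)))
        ≤ ∑ w : (S × T) × U, ((if 0 < d (f3 w) then b (f1 w) * c (f2 w) / d (f3 w) else 0) - a w) :=
          Finset.sum_le_sum (fun w _ => hterm w)
      _ = (∑ w : (S × T) × U, (if 0 < d (f3 w) then b (f1 w) * c (f2 w) / d (f3 w) else 0))
          - ∑ w : (S × T) × U, a w := Finset.sum_sub_distrib _ _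
      _ = (∑ y : T, (if 0 < d y then d y else 0)) - 1 := by rw [hmain, hsum1]
      _ ≤ 1 - 1 := by linarith
      _ = 0 := by norm_num
  have exp : ∑ w : (S × T) × U, (a w * Real.log (b (f1 w)) + a w * Real.log (c (f2 w))
      - a w * Real.log (a w) - a w * Real.log (d (f3 w)))
      = (∑ w : (S × T) × U, a w * Real.log (b (f1 w)))
        + (∑ w : (S × T) × U, a w * Real.log (c (f2 w)))
        - (∑ w : (S × T) × U, a w * Real.log (a w))
        - (∑ w : (S × T) × U, a w * Real.log (d (f3 w))) := by
    rw [Finset.sum_sub_distrib, Finset.sum_sub_distrib, Finset.sum_add_distrib]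
  rw [E0, E1, E2, E3]
  rw [exp] at key
  linarith


lemma entropy_unit : entropy μ (fun _ : Ω => ()) = 0 := by
  have hpre : ((fun _ : Ω => ()) ⁻¹' {()}) = Set.univ := by
    ext ω; simp
  simp [entropy, hpre]

lemma entropy_pair_le {X : Ω → S} {Z : Ω → U} (hX : Measurable X) (hZ : Measurable Z) :
    entropy μ (fun ω => (X ω, Z ω)) ≤ entropy μ X + entropy μ Z := by
  have s := submodularity μ (X := X) (Y := fun _ : Ω => ()) (Z := Z) hX measurable_const hZ
  have hXZm : Measurable (fun ω => (X ω, Z ω)) := hX.prodMk hZ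
  have e0 : entropy μ (fun ω => ((X ω, ()), Z ω)) = entropy μ (fun ω => (X ω, Z ω)) :=
    entropy_eq_of_comp₂ μ hXZm ((hX.prodMk measurable_const).prodMk hZ)
      (fun v => ((v.1, ()), v.2)) (fun v => (v.1.1, v.2)) (fun ω => rfl) (fun ω => rfl)
  have e1 : entropy μ (fun ω => (X ω, ())) = entropy μ X :=
    entropy_eq_of_comp₂ μ hX (hX.prodMk measurable_const)
      (fun v => (v, ())) (fun v => v.1) (fun ω => rfl) (fun ω => rfl)
  have e2 : entropy μ (fun ω => ((), Z ω)) = entropy μ Z :=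
    entropy_eq_of_comp₂ μ hZ (measurable_const.prodMk hZ)
      (fun v => ((), v)) (fun v => v.2) (fun ω => rfl) (fun ω => rfl)
  have e3 := entropy_unit μ
  rw [e0, e1, e2, e3] at s
  linarith

lemma measurable_discrete_comp {δ γ : Type*} [MeasurableSpace δ] [DiscreteMeasurableSpace δ]
    [MeasurableSpace γ] {g : Ω → δ} (hg : Measurable g) (f : δ → γ) :
    Measurable (fun ω => f (g ω)) :=
  Measurable.of_discrete.comp hg

lemma indep_comp_help {α β γ δ : Type*} [MeasurableSpace α] [MeasurableSpace β]
    [MeasurableSpace γ] [MeasurableSpace δ] [DiscreteMeasurableSpace α]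
    [DiscreteMeasurableSpace β]
    {F : Ω → α} {G : Ω → β} (h : IndepFun F G μ) (f : α → γ) (g : β → δ) :
    IndepFun (fun ω => f (F ω)) (fun ω => g (G ω)) μ :=
  h.comp Measurable.of_discrete Measurable.of_discrete

lemma log_card_fun (n k : ℕ) :
    Real.log (Fintype.card (Fin n → Fin k → ZMod 2)) = ((n * k : ℕ) : ℝ) * Real.log 2 := by
  have hcard : Fintype.card (Fin n → Fin k → ZMod 2) = 2 ^ (k * n) := by
    rw [Fintype.card_fun, Fintype.card_fun, ZMod.card, Fintype.card_fin, Fintype.card_fin,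
      ← pow_mul]
  rw [hcard]
  rw [Nat.cast_pow, Real.log_pow]
  push_cast
  ring


lemma Dmap_eq_zero_of_lt {q m : ℕ} (x : Fin q → ZMod 2) (i : Fin q) (h : (i:ℕ) < q - m) :
    Dmap q m x i = 0 := dif_neg (by omega)

def extra (q m m' : ℕ) (x : Fin q → ZMod 2) : Fin (m - m') → ZMod 2 :=
  fun j => if h : m' + (j:ℕ) < q then x ⟨m' + (j:ℕ), h⟩ else 0

def recon (q m m' : ℕ) (c : Fin q → ZMod 2) (r : Fin (m - m') → ZMod 2) : Fin q → ZMod 2 :=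
  fun i => if _ : q - m ≤ (i:ℕ) then
      (if hk : (i:ℕ) - (q - m) < m' then
        (if h2 : q - m' + ((i:ℕ) - (q - m)) < q then c ⟨q - m' + ((i:ℕ) - (q - m)), h2⟩ else 0)
      else if h3 : (i:ℕ) - (q - m) - m' < m - m' then r ⟨(i:ℕ) - (q - m) - m', h3⟩ else 0)
    else 0

lemma recon_spec {q m m' : ℕ} (hm : m ≤ q) (hm' : m' ≤ q) (x : Fin q → ZMod 2) :
    recon q m m' (Dmap q m' x) (extra q m m' x) = Dmap q m x := by
  funext i
  have hi := i.isLt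
  unfold recon Dmap extra
  by_cases h : q - m ≤ (i:ℕ)
  · rw [dif_pos h, dif_pos h]
    set k := (i:ℕ) - (q - m) with hk
    have hkm : k < m := by omega
    by_cases h1 : k < m'
    · rw [dif_pos h1, dif_pos (by omega : q - m' + k < q), dif_pos (by omega : q - m' ≤ q - m' + k)]
      congr 1
      apply Fin.ext
      simp only []
      omega
    · rw [dif_neg h1, dif_pos (by omega : k - m' < m - m'), dif_pos (by omega : m' + (k - m') < q)]
      congr 1
      apply Fin.ext
      simp only []
      omega
  · rw [dif_neg h, dif_neg h]

def trunc (q M : ℕ) (v : Fin q → ZMod 2) : Fin M → ZMod 2 :=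
  fun j => if h : q - M + (j:ℕ) < q then v ⟨q - M + (j:ℕ), h⟩ else 0

def pad (q M : ℕ) (r : Fin M → ZMod 2) : Fin q → ZMod 2 :=
  fun i => if h : q - M ≤ (i:ℕ) ∧ (i:ℕ) - (q - M) < M then r ⟨(i:ℕ) - (q - M), h.2⟩ else 0

lemma pad_trunc {q M : ℕ} (hM : M ≤ q) (v : Fin q → ZMod 2)
    (hv : ∀ i : Fin q, (i:ℕ) < q - M → v i = 0) : pad q M (trunc q M v) = v := by
  funext i
  have hi := i.isLt
  unfold pad trunc
  by_cases h : q - M ≤ (i:ℕ)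
  · rw [dif_pos ⟨h, by omega⟩, dif_pos (by omega : q - M + ((i:ℕ) - (q - M)) < q)]
    congr 1
    apply Fin.ext
    simp only []
    omega
  · rw [dif_neg (by omega)]
    exact (hv i (by omega)).symm

lemma zmod2_add_add (u v : ZMod 2) : u + (u + v) = v := by
  have h : u + u = 0 := by
    fin_cases u <;> decide
  rw [← add_assoc, h, zero_add]


-- vectorized versions
def dN (n q m : ℕ) (x : Fin n → Fin q → ZMod 2) : Fin n → Fin q → ZMod 2 :=
  fun t => Dmap q m (x t)

def exN (n q m m' : ℕ) (x : Fin n → Fin q → ZMod 2) : Fin n → Fin (m - m') → ZMod 2 :=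
  fun t => extra q m m' (x t)

def rcN (n q m m' : ℕ) (c : Fin n → Fin q → ZMod 2) (r : Fin n → Fin (m - m') → ZMod 2) :
    Fin n → Fin q → ZMod 2 :=
  fun t => recon q m m' (c t) (r t)

def trN (n q M : ℕ) (v : Fin n → Fin q → ZMod 2) : Fin n → Fin M → ZMod 2 :=
  fun t => trunc q M (v t)

def pdN (n q M : ℕ) (r : Fin n → Fin M → ZMod 2) : Fin n → Fin q → ZMod 2 :=
  fun t => pad q M (r t)

lemma rcN_spec {n q m m' : ℕ} (hm : m ≤ q) (hm' : m' ≤ q) (x : Fin n → Fin q → ZMod 2) :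
    rcN n q m m' (dN n q m' x) (exN n q m m' x) = dN n q m x :=
  funext fun t => recon_spec hm hm' (x t)

lemma addN_cancel {n q : ℕ} (u v : Fin n → Fin q → ZMod 2) : u + (u + v) = v :=
  funext fun t => funext fun i => zmod2_add_add (u t i) (v t i)

lemma pdN_trN {n q M : ℕ} (hM : M ≤ q) (v : Fin n → Fin q → ZMod 2)
    (hv : ∀ t (i : Fin q), (i:ℕ) < q - M → v t i = 0) : pdN n q M (trN n q M v) = v :=
  funext fun t => pad_trunc hM (v t) (hv t)

end Aux

theorem stmt7 {Ω : Type*} [MeasurableSpace Ω] (μ : Measure Ω) [IsProbabilityMeasure μ]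
    (n q m11 m12 m21 m22 : ℕ) (hn : 1 ≤ n) (hq : 1 ≤ q)
    (h11 : m11 ≤ q) (h12 : m12 ≤ q) (h21 : m21 ≤ q) (h22 : m22 ≤ q)
    {D1 D2 : Type*} [Fintype D1] [Nonempty D1] [MeasurableSpace D1] [DiscreteMeasurableSpace D1]
    [Fintype D2] [Nonempty D2] [MeasurableSpace D2] [DiscreteMeasurableSpace D2]
    (W1 : Ω → D1) (W2 : Ω → D2) (X1 X2 : Ω → (Fin n → Fin q → ZMod 2))
    (hW1 : Measurable W1) (hW2 : Measurable W2) (hX1 : Measurable X1) (hX2 : Measurable X2)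
    (hIndep : IndepFun (fun ω => (W1 ω, X1 ω)) (fun ω => (W2 ω, X2 ω)) μ)
    (y1 y2 : Ω → (Fin n → Fin q → ZMod 2))
    (hy1 : ∀ ω t, y1 ω t = Dmap q m11 (X1 ω t) + Dmap q m12 (X2 ω t))
    (hy2 : ∀ ω t, y2 ω t = Dmap q m21 (X1 ω t) + Dmap q m22 (X2 ω t)) :
    (mutualInfo μ W1 y1 - mutualInfo μ W1 y2) + mutualInfo μ X1 y1 + mutualInfo μ X2 y2 ≤
      (n : ℝ) *
        (((max (m11 : ℤ) (m12 : ℤ) + max ((m11 : ℤ) - (m21 : ℤ)) 0 +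
           max ((m22 : ℤ) - (m12 : ℤ)) 0) : ℤ) : ℝ) * Real.log 2 := by
  classical
  have hy1fun : y1 = fun ω => Aux.dN n q m11 (X1 ω) + Aux.dN n q m12 (X2 ω) :=
    funext fun ω => funext fun t => hy1 ω t
  have hy2fun : y2 = fun ω => Aux.dN n q m21 (X1 ω) + Aux.dN n q m22 (X2 ω) :=
    funext fun ω => funext fun t => hy2 ω t
  subst hy1fun
  subst hy2fun
  have hV1 : Measurable (fun ω => (W1 ω, X1 ω)) := hW1.prodMk hX1
  have hV12 : Measurable (fun ω => ((W1 ω, X1 ω), (W2 ω, X2 ω))) :=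
    hV1.prodMk (hW2.prodMk hX2)
  -- measurability of all random variables used
  have my1 : Measurable (fun ω => Aux.dN n q m11 (X1 ω) + Aux.dN n q m12 (X2 ω)) := (Aux.measurable_discrete_comp hV12 (fun v => Aux.dN n q m11 v.1.2 + Aux.dN n q m12 v.2.2))
  have my2 : Measurable (fun ω => Aux.dN n q m21 (X1 ω) + Aux.dN n q m22 (X2 ω)) := (Aux.measurable_discrete_comp hV12 (fun v => Aux.dN n q m21 v.1.2 + Aux.dN n q m22 v.2.2))
  have mB : Measurable (fun ω => Aux.dN n q m12 (X2 ω)) := (Aux.measurable_discrete_comp hV12 (fun v => Aux.dN n q m12 v.2.2))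
  have mC : Measurable (fun ω => Aux.dN n q m21 (X1 ω)) := (Aux.measurable_discrete_comp hV12 (fun v => Aux.dN n q m21 v.1.2))
  have mE : Measurable (fun ω => Aux.dN n q m22 (X2 ω)) := (Aux.measurable_discrete_comp hV12 (fun v => Aux.dN n q m22 v.2.2))
  have mR1 : Measurable (fun ω => Aux.exN n q m11 m21 (X1 ω)) := (Aux.measurable_discrete_comp hV12 (fun v => Aux.exN n q m11 m21 v.1.2))
  have mR2 : Measurable (fun ω => Aux.exN n q m22 m12 (X2 ω)) := (Aux.measurable_discrete_comp hV12 (fun v => Aux.exN n q m22 m12 v.2.2))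
  have mX1B : Measurable (fun ω => (X1 ω, Aux.dN n q m12 (X2 ω))) := (Aux.measurable_discrete_comp hV12 (fun v => (v.1.2, Aux.dN n q m12 v.2.2)))
  have mX1y1 : Measurable (fun ω => (X1 ω, Aux.dN n q m11 (X1 ω) + Aux.dN n q m12 (X2 ω))) := (Aux.measurable_discrete_comp hV12 (fun v => (v.1.2, Aux.dN n q m11 v.1.2 + Aux.dN n q m12 v.2.2)))
  have mX2C : Measurable (fun ω => (X2 ω, Aux.dN n q m21 (X1 ω))) := (Aux.measurable_discrete_comp hV12 (fun v => (v.2.2, Aux.dN n q m21 v.1.2)))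
  have mX2y2 : Measurable (fun ω => (X2 ω, Aux.dN n q m21 (X1 ω) + Aux.dN n q m22 (X2 ω))) := (Aux.measurable_discrete_comp hV12 (fun v => (v.2.2, Aux.dN n q m21 v.1.2 + Aux.dN n q m22 v.2.2)))
  have mW1C : Measurable (fun ω => (W1 ω, Aux.dN n q m21 (X1 ω))) := (Aux.measurable_discrete_comp hV12 (fun v => (v.1.1, Aux.dN n q m21 v.1.2)))
  have mW1Cy2 : Measurable (fun ω => ((W1 ω, Aux.dN n q m21 (X1 ω)), Aux.dN n q m21 (X1 ω) + Aux.dN n q m22 (X2 ω))) :=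
    (Aux.measurable_discrete_comp hV12 (fun v => ((v.1.1, Aux.dN n q m21 v.1.2), Aux.dN n q m21 v.1.2 + Aux.dN n q m22 v.2.2)))
  have mW1CE : Measurable (fun ω => ((W1 ω, Aux.dN n q m21 (X1 ω)), Aux.dN n q m22 (X2 ω))) :=
    (Aux.measurable_discrete_comp hV12 (fun v => ((v.1.1, Aux.dN n q m21 v.1.2), Aux.dN n q m22 v.2.2)))
  have mCR1B : Measurable (fun ω => ((Aux.dN n q m21 (X1 ω), Aux.exN n q m11 m21 (X1 ω)), Aux.dN n q m12 (X2 ω))) :=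
    (Aux.measurable_discrete_comp hV12 (fun v => ((Aux.dN n q m21 v.1.2, Aux.exN n q m11 m21 v.1.2), Aux.dN n q m12 v.2.2)))
  have mCR1 : Measurable (fun ω => (Aux.dN n q m21 (X1 ω), Aux.exN n q m11 m21 (X1 ω))) := (Aux.measurable_discrete_comp hV12 (fun v => (Aux.dN n q m21 v.1.2, Aux.exN n q m11 m21 v.1.2)))
  have mBR2 : Measurable (fun ω => (Aux.dN n q m12 (X2 ω), Aux.exN n q m22 m12 (X2 ω))) := (Aux.measurable_discrete_comp hV12 (fun v => (Aux.dN n q m12 v.2.2, Aux.exN n q m22 m12 v.2.2)))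
  have mV1y1 : Measurable (fun ω => ((W1 ω, X1 ω), Aux.dN n q m11 (X1 ω) + Aux.dN n q m12 (X2 ω))) :=
    (Aux.measurable_discrete_comp hV12 (fun v => ((v.1.1, v.1.2), Aux.dN n q m11 v.1.2 + Aux.dN n q m12 v.2.2)))
  have mV1B : Measurable (fun ω => ((W1 ω, X1 ω), Aux.dN n q m12 (X2 ω))) :=
    (Aux.measurable_discrete_comp hV12 (fun v => ((v.1.1, v.1.2), Aux.dN n q m12 v.2.2)))
  have mBig1 : Measurable (fun ω => ((Aux.dN n q m11 (X1 ω) + Aux.dN n q m12 (X2 ω), (W1 ω, Aux.dN n q m21 (X1 ω))), (W1 ω, X1 ω))) :=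
    (Aux.measurable_discrete_comp hV12 (fun v => ((Aux.dN n q m11 v.1.2 + Aux.dN n q m12 v.2.2, (v.1.1, Aux.dN n q m21 v.1.2)), (v.1.1, v.1.2))))
  have mWCV1 : Measurable (fun ω => ((W1 ω, Aux.dN n q m21 (X1 ω)), (W1 ω, X1 ω))) :=
    (Aux.measurable_discrete_comp hV12 (fun v => ((v.1.1, Aux.dN n q m21 v.1.2), (v.1.1, v.1.2))))
  have my1WC : Measurable (fun ω => (Aux.dN n q m11 (X1 ω) + Aux.dN n q m12 (X2 ω), (W1 ω, Aux.dN n q m21 (X1 ω)))) :=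
    (Aux.measurable_discrete_comp hV12 (fun v => (Aux.dN n q m11 v.1.2 + Aux.dN n q m12 v.2.2, (v.1.1, Aux.dN n q m21 v.1.2))))
  have mW1y1C : Measurable (fun ω => ((W1 ω, Aux.dN n q m11 (X1 ω) + Aux.dN n q m12 (X2 ω)), Aux.dN n q m21 (X1 ω))) :=
    (Aux.measurable_discrete_comp hV12 (fun v => ((v.1.1, Aux.dN n q m11 v.1.2 + Aux.dN n q m12 v.2.2), Aux.dN n q m21 v.1.2)))
  have mtr : Measurable (fun ω => Aux.trN n q (max m11 m12) (Aux.dN n q m11 (X1 ω) + Aux.dN n q m12 (X2 ω))) :=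
    (Aux.measurable_discrete_comp hV12 (fun v => Aux.trN n q (max m11 m12) (Aux.dN n q m11 v.1.2 + Aux.dN n q m12 v.2.2)))
  -- Fact 1 : H(X1, y1) = H(X1) + H(B)
  have F1 : entropy μ (fun ω => (X1 ω, Aux.dN n q m11 (X1 ω) + Aux.dN n q m12 (X2 ω))) = entropy μ X1 + entropy μ (fun ω => Aux.dN n q m12 (X2 ω)) := by
    have e := Aux.entropy_eq_of_comp₂ μ (X := fun ω => (X1 ω, Aux.dN n q m12 (X2 ω)))
      (Y := fun ω => (X1 ω, Aux.dN n q m11 (X1 ω) + Aux.dN n q m12 (X2 ω))) mX1B mX1y1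
      (fun v => (v.1, Aux.dN n q m11 v.1 + v.2)) (fun v => (v.1, Aux.dN n q m11 v.1 + v.2))
      (fun ω => rfl) (fun ω => by simp only [Aux.addN_cancel])
    have i := Aux.entropy_pair_indep μ (X := X1) (Y := fun ω => Aux.dN n q m12 (X2 ω)) hX1 mB
      (Aux.indep_comp_help μ hIndep (fun v => v.2) (fun v => Aux.dN n q m12 v.2))
    exact e.trans i
  -- Fact 2 : H(X2, y2) = H(X2) + H(C)
  have F2 : entropy μ (fun ω => (X2 ω, Aux.dN n q m21 (X1 ω) + Aux.dN n q m22 (X2 ω))) = entropy μ X2 + entropy μ (fun ω => Aux.dN n q m21 (X1 ω)) := by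
    have e := Aux.entropy_eq_of_comp₂ μ (X := fun ω => (X2 ω, Aux.dN n q m21 (X1 ω)))
      (Y := fun ω => (X2 ω, Aux.dN n q m21 (X1 ω) + Aux.dN n q m22 (X2 ω))) mX2C mX2y2
      (fun v => (v.1, Aux.dN n q m22 v.1 + v.2)) (fun v => (v.1, Aux.dN n q m22 v.1 + v.2))
      (fun ω => by
        simp only []
        rw [add_comm (Aux.dN n q m22 (X2 ω)) (Aux.dN n q m21 (X1 ω))])
      (fun ω => by
        simp only []
        rw [add_comm (Aux.dN n q m21 (X1 ω)) (Aux.dN n q m22 (X2 ω)), Aux.addN_cancel])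
    have i := Aux.entropy_pair_indep μ (X := X2) (Y := fun ω => Aux.dN n q m21 (X1 ω)) hX2 mC
      ((Aux.indep_comp_help μ hIndep (fun v => Aux.dN n q m21 v.2) (fun v => v.2)).symm)
    exact e.trans i
  -- Fact 3 : H(W1, y2) ≤ H(W1, C) + H(E)
  have F3 : entropy μ (fun ω => (W1 ω, Aux.dN n q m21 (X1 ω) + Aux.dN n q m22 (X2 ω)))
      ≤ entropy μ (fun ω => (W1 ω, Aux.dN n q m21 (X1 ω))) + entropy μ (fun ω => Aux.dN n q m22 (X2 ω)) := by
    have s1 : entropy μ (fun ω => (W1 ω, Aux.dN n q m21 (X1 ω) + Aux.dN n q m22 (X2 ω)))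
        ≤ entropy μ (fun ω => ((W1 ω, Aux.dN n q m21 (X1 ω)), Aux.dN n q m21 (X1 ω) + Aux.dN n q m22 (X2 ω))) :=
      Aux.entropy_le_of_comp μ mW1Cy2 (fun v => (v.1.1, v.2)) (fun ω => rfl)
    have s2 : entropy μ (fun ω => ((W1 ω, Aux.dN n q m21 (X1 ω)), Aux.dN n q m21 (X1 ω) + Aux.dN n q m22 (X2 ω)))
        = entropy μ (fun ω => ((W1 ω, Aux.dN n q m21 (X1 ω)), Aux.dN n q m22 (X2 ω))) :=
      Aux.entropy_eq_of_comp₂ μ (X := fun ω => ((W1 ω, Aux.dN n q m21 (X1 ω)), Aux.dN n q m22 (X2 ω)))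
        (Y := fun ω => ((W1 ω, Aux.dN n q m21 (X1 ω)), Aux.dN n q m21 (X1 ω) + Aux.dN n q m22 (X2 ω))) mW1CE mW1Cy2
        (fun v => (v.1, v.1.2 + v.2)) (fun v => (v.1, v.1.2 + v.2))
        (fun ω => rfl) (fun ω => by simp only [Aux.addN_cancel])
    have s3 : entropy μ (fun ω => ((W1 ω, Aux.dN n q m21 (X1 ω)), Aux.dN n q m22 (X2 ω)))
        = entropy μ (fun ω => (W1 ω, Aux.dN n q m21 (X1 ω))) + entropy μ (fun ω => Aux.dN n q m22 (X2 ω)) :=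
      Aux.entropy_pair_indep μ mW1C mE
        (Aux.indep_comp_help μ hIndep (fun v => (v.1, Aux.dN n q m21 v.2))
          (fun v => Aux.dN n q m22 v.2))
    linarith
  -- Fact 4a : submodularity
  have F4a := Aux.submodularity μ (X := W1) (Y := fun ω => Aux.dN n q m11 (X1 ω) + Aux.dN n q m12 (X2 ω)) (Z := fun ω => Aux.dN n q m21 (X1 ω))
    hW1 my1 mC
  -- Fact 4b : H(y1, C) ≤ H(C) + H(B) + K1
  have F4b : entropy μ (fun ω => (Aux.dN n q m11 (X1 ω) + Aux.dN n q m12 (X2 ω), Aux.dN n q m21 (X1 ω)))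
      ≤ entropy μ (fun ω => Aux.dN n q m21 (X1 ω)) + entropy μ (fun ω => Aux.dN n q m12 (X2 ω))
        + ((n * (m11 - m21) : ℕ) : ℝ) * Real.log 2 := by
    have s1 : entropy μ (fun ω => (Aux.dN n q m11 (X1 ω) + Aux.dN n q m12 (X2 ω), Aux.dN n q m21 (X1 ω)))
        ≤ entropy μ (fun ω => ((Aux.dN n q m21 (X1 ω), Aux.exN n q m11 m21 (X1 ω)), Aux.dN n q m12 (X2 ω))) :=
      Aux.entropy_le_of_comp μ mCR1B
        (fun v => (Aux.rcN n q m11 m21 v.1.1 v.1.2 + v.2, v.1.1))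
        (fun ω => by simp only [Aux.rcN_spec h11 h21])
    have s2 : entropy μ (fun ω => ((Aux.dN n q m21 (X1 ω), Aux.exN n q m11 m21 (X1 ω)), Aux.dN n q m12 (X2 ω)))
        = entropy μ (fun ω => (Aux.dN n q m21 (X1 ω), Aux.exN n q m11 m21 (X1 ω))) + entropy μ (fun ω => Aux.dN n q m12 (X2 ω)) :=
      Aux.entropy_pair_indep μ mCR1 mB
        (Aux.indep_comp_help μ hIndep
          (fun v => (Aux.dN n q m21 v.2, Aux.exN n q m11 m21 v.2))
          (fun v => Aux.dN n q m12 v.2))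
    have s3 : entropy μ (fun ω => (Aux.dN n q m21 (X1 ω), Aux.exN n q m11 m21 (X1 ω)))
        ≤ entropy μ (fun ω => Aux.dN n q m21 (X1 ω)) + entropy μ (fun ω => Aux.exN n q m11 m21 (X1 ω)) :=
      Aux.entropy_pair_le μ mC mR1
    have s4 : entropy μ (fun ω => Aux.exN n q m11 m21 (X1 ω)) ≤ ((n * (m11 - m21) : ℕ) : ℝ) * Real.log 2 :=
      le_of_le_of_eq (Aux.entropy_le_log_card μ mR1) (Aux.log_card_fun n (m11 - m21))
    linarith
  -- Fact 4c : H(W1,C) + H(B) ≤ H((W1,y1),C)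
  have F4c : entropy μ (fun ω => (W1 ω, Aux.dN n q m21 (X1 ω))) + entropy μ (fun ω => Aux.dN n q m12 (X2 ω))
      ≤ entropy μ (fun ω => ((W1 ω, Aux.dN n q m11 (X1 ω) + Aux.dN n q m12 (X2 ω)), Aux.dN n q m21 (X1 ω))) := by
    have sub1 := Aux.submodularity μ (X := fun ω => Aux.dN n q m11 (X1 ω) + Aux.dN n q m12 (X2 ω)) (Y := fun ω => (W1 ω, Aux.dN n q m21 (X1 ω)))
      (Z := fun ω => (W1 ω, X1 ω)) my1 mW1C hV1
    have sub2 : entropy μ (fun ω => ((Aux.dN n q m11 (X1 ω) + Aux.dN n q m12 (X2 ω), (W1 ω, Aux.dN n q m21 (X1 ω))), (W1 ω, X1 ω)))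
        = entropy μ (fun ω => ((W1 ω, X1 ω), Aux.dN n q m11 (X1 ω) + Aux.dN n q m12 (X2 ω))) :=
      Aux.entropy_eq_of_comp₂ μ (X := fun ω => ((W1 ω, X1 ω), Aux.dN n q m11 (X1 ω) + Aux.dN n q m12 (X2 ω))) mV1y1 mBig1
        (fun v => ((v.2, (v.1.1, Aux.dN n q m21 v.1.2)), v.1))
        (fun v => (v.2, v.1.1)) (fun ω => rfl) (fun ω => rfl)
    have sub3 : entropy μ (fun ω => ((W1 ω, Aux.dN n q m21 (X1 ω)), (W1 ω, X1 ω)))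
        = entropy μ (fun ω => (W1 ω, X1 ω)) :=
      Aux.entropy_eq_of_comp₂ μ (X := fun ω => (W1 ω, X1 ω)) hV1 mWCV1
        (fun v => ((v.1, Aux.dN n q m21 v.2), v)) (fun v => v.2)
        (fun ω => rfl) (fun ω => rfl)
    have sub4 : entropy μ (fun ω => ((W1 ω, X1 ω), Aux.dN n q m11 (X1 ω) + Aux.dN n q m12 (X2 ω)))
        = entropy μ (fun ω => (W1 ω, X1 ω)) + entropy μ (fun ω => Aux.dN n q m12 (X2 ω)) := by
      have e := Aux.entropy_eq_of_comp₂ μ (X := fun ω => ((W1 ω, X1 ω), Aux.dN n q m12 (X2 ω)))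
        (Y := fun ω => ((W1 ω, X1 ω), Aux.dN n q m11 (X1 ω) + Aux.dN n q m12 (X2 ω))) mV1B mV1y1
        (fun v => (v.1, Aux.dN n q m11 v.1.2 + v.2)) (fun v => (v.1, Aux.dN n q m11 v.1.2 + v.2))
        (fun ω => rfl) (fun ω => by simp only [Aux.addN_cancel])
      have i := Aux.entropy_pair_indep μ (X := fun ω => (W1 ω, X1 ω)) (Y := fun ω => Aux.dN n q m12 (X2 ω))
        hV1 mB (Aux.indep_comp_help μ hIndep (fun v => v) (fun v => Aux.dN n q m12 v.2))
      exact e.trans i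
    have sub5 : entropy μ (fun ω => (Aux.dN n q m11 (X1 ω) + Aux.dN n q m12 (X2 ω), (W1 ω, Aux.dN n q m21 (X1 ω))))
        = entropy μ (fun ω => ((W1 ω, Aux.dN n q m11 (X1 ω) + Aux.dN n q m12 (X2 ω)), Aux.dN n q m21 (X1 ω))) :=
      Aux.entropy_eq_of_comp₂ μ (X := fun ω => ((W1 ω, Aux.dN n q m11 (X1 ω) + Aux.dN n q m12 (X2 ω)), Aux.dN n q m21 (X1 ω))) mW1y1C my1WC
        (fun v => (v.1.2, (v.1.1, v.2))) (fun v => ((v.2.1, v.1), v.2.2))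
        (fun ω => rfl) (fun ω => rfl)
    rw [sub2, sub3, sub4, sub5] at sub1
    linarith
  -- Fact 5 : H(E) ≤ H(B) + K2
  have F5 : entropy μ (fun ω => Aux.dN n q m22 (X2 ω))
      ≤ entropy μ (fun ω => Aux.dN n q m12 (X2 ω)) + ((n * (m22 - m12) : ℕ) : ℝ) * Real.log 2 := by
    have s1 : entropy μ (fun ω => Aux.dN n q m22 (X2 ω)) ≤ entropy μ (fun ω => (Aux.dN n q m12 (X2 ω), Aux.exN n q m22 m12 (X2 ω))) :=
      Aux.entropy_le_of_comp μ mBR2 (fun v => Aux.rcN n q m22 m12 v.1 v.2)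
        (fun ω => Aux.rcN_spec h22 h12 (X2 ω))
    have s2 : entropy μ (fun ω => (Aux.dN n q m12 (X2 ω), Aux.exN n q m22 m12 (X2 ω)))
        ≤ entropy μ (fun ω => Aux.dN n q m12 (X2 ω)) + entropy μ (fun ω => Aux.exN n q m22 m12 (X2 ω)) :=
      Aux.entropy_pair_le μ mB mR2
    have s3 : entropy μ (fun ω => Aux.exN n q m22 m12 (X2 ω)) ≤ ((n * (m22 - m12) : ℕ) : ℝ) * Real.log 2 :=
      le_of_le_of_eq (Aux.entropy_le_log_card μ mR2) (Aux.log_card_fun n (m22 - m12))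
    linarith
  -- Fact 6 : H(y1) ≤ K0
  have F6 : entropy μ (fun ω => Aux.dN n q m11 (X1 ω) + Aux.dN n q m12 (X2 ω)) ≤ ((n * (max m11 m12) : ℕ) : ℝ) * Real.log 2 := by
    have hM1 : m11 ≤ max m11 m12 := le_max_left _ _
    have hM2 : m12 ≤ max m11 m12 := le_max_right _ _
    have hMq : max m11 m12 ≤ q := max_le h11 h12
    have s1 : entropy μ (fun ω => Aux.dN n q m11 (X1 ω) + Aux.dN n q m12 (X2 ω))
        ≤ entropy μ (fun ω => Aux.trN n q (max m11 m12) (Aux.dN n q m11 (X1 ω) + Aux.dN n q m12 (X2 ω))) :=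
      Aux.entropy_le_of_comp μ mtr (Aux.pdN n q (max m11 m12))
        (fun ω => Aux.pdN_trN hMq _ (by
          intro t i hilt
          show Dmap q m11 (X1 ω t) i + Dmap q m12 (X2 ω t) i = 0
          rw [Aux.Dmap_eq_zero_of_lt _ _ (by omega), Aux.Dmap_eq_zero_of_lt _ _ (by omega),
            add_zero]))
    have s2 : entropy μ (fun ω => Aux.trN n q (max m11 m12) (Aux.dN n q m11 (X1 ω) + Aux.dN n q m12 (X2 ω)))
        ≤ ((n * (max m11 m12) : ℕ) : ℝ) * Real.log 2 :=
      le_of_le_of_eq (Aux.entropy_le_log_card μ mtr) (Aux.log_card_fun n (max m11 m12))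
    linarith
  -- final assembly
  have hRHS : (n : ℝ) * (((max (m11 : ℤ) (m12 : ℤ) + max ((m11 : ℤ) - (m21 : ℤ)) 0 +
        max ((m22 : ℤ) - (m12 : ℤ)) 0) : ℤ) : ℝ) * Real.log 2
      = ((n * (max m11 m12) : ℕ) : ℝ) * Real.log 2
        + ((n * (m11 - m21) : ℕ) : ℝ) * Real.log 2
        + ((n * (m22 - m12) : ℕ) : ℝ) * Real.log 2 := by
    have hint : (max (m11 : ℤ) (m12 : ℤ) + max ((m11 : ℤ) - (m21 : ℤ)) 0 +
        max ((m22 : ℤ) - (m12 : ℤ)) 0)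
        = ((max m11 m12 + (m11 - m21) + (m22 - m12) : ℕ) : ℤ) := by
      push_cast
      omega
    rw [hint]
    push_cast
    ring
  rw [mutualInfo, mutualInfo, mutualInfo, mutualInfo, hRHS]
  linarith [F1, F2, F3, F4a, F4b, F4c, F5, F6]
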